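/- Let c(θ, φ) = ψ(θ − φ) with ψ(x) = log(1 + Σᵢ e^{xᵢ}) on ℝ^{n−1}. If φ : Δₙ → ℝ ∪ {−∞} is exponentially concave, then the function f(θ) = φ(p(θ)) + ψ(θ) (where p(θ) is the inverse exponential coordinate map) is c-concave on ℝ^{n−1}, i.e., f = g* for some g : ℝ^{n−1} → ℝ ∪ {−∞}, where g*(θ) = inf_φ (c(θ,φ) − g(φ)). -/

import Mathlib

open Real Finset

/-- The open unit simplex in ℝⁿ. -/
def openSimplex (n : ℕ) : Set (Fin n → ℝ) :=
  {p | (∀ i, 0 < p i) ∧ ∑ i, p i = 1}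

/-- `ψ(x) = log(1 + Σ e^{xᵢ})`. -/
noncomputable def psiFun {n : ℕ} (x : Fin n → ℝ) : ℝ :=
  Real.log (1 + ∑ i, Real.exp (x i))

/-- Inverse of the exponential coordinate map: `pᵢ = e^{θᵢ − ψ(θ)}` (with `θₙ = 0`). -/
noncomputable def pMap {n : ℕ} (θ : Fin n → ℝ) : Fin (n + 1) → ℝ :=
  fun i => Real.exp ((Fin.snoc θ (0 : ℝ) : Fin (n + 1) → ℝ) i - psiFun θ)






lemma one_add_sum_exp_pos {n : ℕ} (x : Fin n → ℝ) : 0 < 1 + ∑ i, Real.exp (x i) := by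
  positivity

lemma exp_psiFun {n : ℕ} (x : Fin n → ℝ) : Real.exp (psiFun x) = 1 + ∑ i, Real.exp (x i) :=
  Real.exp_log (one_add_sum_exp_pos x)

lemma pMap_mem {n : ℕ} (θ : Fin n → ℝ) : pMap θ ∈ openSimplex (n + 1) := by
  constructor
  · intro i; exact Real.exp_pos _
  · have : ∀ i : Fin (n + 1), pMap θ i
        = Real.exp ((Fin.snoc θ (0 : ℝ) : Fin (n + 1) → ℝ) i) * Real.exp (-psiFun θ) := by
      intro i; rw [pMap, ← Real.exp_add]; ring_nf
    simp only [this]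
    rw [← Finset.sum_mul, Fin.sum_univ_castSucc]
    simp only [Fin.snoc_castSucc, Fin.snoc_last, Real.exp_zero]
    rw [Real.exp_neg, exp_psiFun]
    have h := one_add_sum_exp_pos θ
    field_simp
    ring

lemma pMap_castSucc {n : ℕ} (θ : Fin n → ℝ) (i : Fin n) :
    pMap θ (Fin.castSucc i) = Real.exp (θ i - psiFun θ) := by
  simp [pMap]

lemma pMap_last {n : ℕ} (θ : Fin n → ℝ) :
    pMap θ (Fin.last n) = Real.exp (-psiFun θ) := by
  simp [pMap]


def Uset (n : ℕ) : Set (Fin n → ℝ) := {x | (∀ i, 0 < x i) ∧ ∑ i, x i < 1}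

noncomputable def jmap {n : ℕ} (x : Fin n → ℝ) : Fin (n + 1) → ℝ :=
  Fin.snoc x (1 - ∑ i, x i)

lemma jmap_mem {n : ℕ} {x : Fin n → ℝ} (hx : x ∈ Uset n) : jmap x ∈ openSimplex (n + 1) := by
  obtain ⟨h1, h2⟩ := hx
  constructor
  · intro i
    refine Fin.lastCases ?_ ?_ i
    · simp [jmap]; linarith
    · intro j; simpa [jmap] using h1 j
  · rw [Fin.sum_univ_castSucc]
    simp [jmap]

lemma xcoord_mem {n : ℕ} {q : Fin (n + 1) → ℝ} (hq : q ∈ openSimplex (n + 1)) :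
    (fun i : Fin n => q (Fin.castSucc i)) ∈ Uset n ∧
      jmap (fun i : Fin n => q (Fin.castSucc i)) = q := by
  obtain ⟨h1, h2⟩ := hq
  rw [Fin.sum_univ_castSucc] at h2
  have hs : ∑ i : Fin n, q (Fin.castSucc i) = 1 - q (Fin.last n) := by linarith
  refine ⟨⟨fun i => h1 _, by rw [hs]; have := h1 (Fin.last n); linarith⟩, ?_⟩
  funext i
  refine Fin.lastCases ?_ ?_ i
  · simp [jmap, hs]
  · intro j; simp [jmap]

lemma jmap_combo {n : ℕ} (x y : Fin n → ℝ) {a b : ℝ} (hab : a + b = 1) :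
    jmap (a • x + b • y) = a • jmap x + b • jmap y := by
  funext i
  refine Fin.lastCases ?_ ?_ i
  · simp only [jmap, Fin.snoc_last, Pi.add_apply, Pi.smul_apply, smul_eq_mul]
    rw [Finset.sum_add_distrib]
    rw [← Finset.mul_sum, ← Finset.mul_sum]
    nlinarith
  · intro j; simp [jmap]

lemma concaveOn_comp_jmap {n : ℕ} {Φ : (Fin (n + 1) → ℝ) → ℝ} (hU : Convex ℝ (Uset n))
    (hconc : ConcaveOn ℝ (openSimplex (n + 1)) Φ) :
    ConcaveOn ℝ (Uset n) (fun x => Φ (jmap x)) := by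
  refine ⟨hU, fun x hx y hy a b ha hb hab => ?_⟩
  simp only
  rw [jmap_combo x y hab]
  exact hconc.2 (jmap_mem hx) (jmap_mem hy) ha hb hab

lemma zero_propagate {n : ℕ} {Φ : (Fin (n + 1) → ℝ) → ℝ}
    (hΦ0 : ∀ p ∈ openSimplex (n + 1), 0 ≤ Φ p)
    (hconc : ConcaveOn ℝ (openSimplex (n + 1)) Φ)
    {q₀ : Fin (n + 1) → ℝ} (hq₀ : q₀ ∈ openSimplex (n + 1)) (h0 : Φ q₀ = 0)
    {q : Fin (n + 1) → ℝ} (hq : q ∈ openSimplex (n + 1)) : Φ q = 0 := by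
  obtain ⟨hq₀p, hq₀s⟩ := hq₀
  obtain ⟨hqp, hqs⟩ := hq
  set m : ℝ := Finset.univ.inf' ⟨Fin.last n, Finset.mem_univ _⟩ q₀ with hm
  have hmpos : 0 < m := (Finset.lt_inf'_iff _).2 fun i _ => hq₀p i
  have hmle : ∀ i, m ≤ q₀ i := fun i => Finset.inf'_le _ (Finset.mem_univ i)
  have hm1 : m ≤ 1 := by
    have := hmle (Fin.last n)
    have hle : q₀ (Fin.last n) ≤ 1 := by
      rw [← hq₀s]
      exact Finset.single_le_sum (fun i _ => (hq₀p i).le) (Finset.mem_univ _)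
    linarith
  set t : ℝ := m / 2 with ht
  have htpos : 0 < t := by positivity
  have ht1 : t < 1 := by rw [ht]; linarith
  have hq1 : ∀ i, q i ≤ 1 := fun i => by
    rw [← hqs]; exact Finset.single_le_sum (fun i _ => (hqp i).le) (Finset.mem_univ _)
  set r : Fin (n + 1) → ℝ := fun i => (q₀ i - t * q i) / (1 - t) with hr
  have hrmem : r ∈ openSimplex (n + 1) := by
    constructor
    · intro i
      have h1 : t * q i ≤ t := by nlinarith [(hqp i).le, hq1 i]
      have h2 : t < q₀ i := lt_of_lt_of_le (by rw [ht]; linarith) (hmle i)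
      have hnum : 0 < q₀ i - t * q i := by linarith
      exact div_pos hnum (by linarith)
    · rw [hr]
      rw [← Finset.sum_div]
      rw [Finset.sum_sub_distrib, ← Finset.mul_sum, hq₀s, hqs]
      rw [mul_one, div_self (by linarith : (1:ℝ) - t ≠ 0)]
  have hcombo : t • q + (1 - t) • r = q₀ := by
    funext i
    simp only [Pi.add_apply, Pi.smul_apply, smul_eq_mul, hr]
    rw [mul_comm (1 - t), div_mul_cancel₀ _ (by linarith : (1:ℝ) - t ≠ 0)]
    ring
  have := hconc.2 ⟨hqp, hqs⟩ hrmem htpos.le (by linarith : (0:ℝ) ≤ 1 - t) (by ring)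
  rw [hcombo, h0] at this
  have hr0 : 0 ≤ Φ r := hΦ0 r hrmem
  have hΦq : 0 ≤ Φ q := hΦ0 q ⟨hqp, hqs⟩
  simp only [smul_eq_mul] at this
  by_contra hne
  have hpos : 0 < Φ q := lt_of_le_of_ne hΦq (Ne.symm hne)
  nlinarith [mul_pos htpos hpos, mul_nonneg (by linarith : (0:ℝ) ≤ 1 - t) hr0]

lemma ereal_sub_le_of_le {a x : ℝ} {b : EReal} (h : b ≤ (a : EReal) - (x : ℝ)) :
    (x : EReal) ≤ (a : EReal) - b := by
  induction b using EReal.rec with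
  | bot => rw [EReal.coe_sub_bot]; exact le_top
  | coe b =>
      rw [← EReal.coe_sub] at h ⊢
      rw [EReal.coe_le_coe_iff] at h ⊢
      linarith
  | top =>
      rw [← EReal.coe_sub, top_le_iff] at h
      exact absurd h (EReal.coe_ne_top _)

lemma ereal_le_of_forall_eps {x : EReal} {y : ℝ} (h : ∀ ε : ℝ, 0 < ε → x ≤ ((y + ε : ℝ) : EReal)) :
    x ≤ (y : EReal) := by
  induction x using EReal.rec with
  | bot => exact bot_le
  | coe x =>
      rw [EReal.coe_le_coe_iff]
      by_contra hc
      push_neg at hc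
      have := h ((x - y) / 2) (by linarith)
      rw [EReal.coe_le_coe_iff] at this
      linarith
  | top =>
      have := h 1 one_pos
      rw [top_le_iff] at this
      exact absurd this (EReal.coe_ne_top _)


lemma Uset_open (n : ℕ) : IsOpen (Uset n) := by
  have h1 : Uset n = (⋂ i : Fin n, {x : Fin n → ℝ | 0 < x i}) ∩ {x | ∑ i, x i < 1} := by
    ext x; simp [Uset, Set.mem_iInter]
  rw [h1]
  refine (isOpen_iInter_of_finite fun i => ?_).inter ?_
  · exact isOpen_lt continuous_const (continuous_apply i)
  · exact isOpen_lt (by continuity) continuous_const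

lemma Uset_convex (n : ℕ) : Convex ℝ (Uset n) := by
  have h1 : Uset n = (⋂ i : Fin n, {x : Fin n → ℝ | 0 < x i}) ∩ {x | ∑ i, x i < 1} := by
    ext x; simp [Uset, Set.mem_iInter]
  rw [h1]
  refine (convex_iInter fun i => ?_).inter ?_
  · exact convex_halfSpace_gt (LinearMap.isLinear (LinearMap.proj i)) 0
  · exact convex_halfSpace_lt ⟨fun x y => by simp [Finset.sum_add_distrib],
      fun c x => by simp [Finset.mul_sum, smul_eq_mul]⟩ 1

/-- Subgradient existence for a concave function on an open convex set. -/
lemma exists_subgradient {E : Type*} [NormedAddCommGroup E] [NormedSpace ℝ E]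
    [FiniteDimensional ℝ E] {U : Set E} (hUo : IsOpen U) (hUc : Convex ℝ U)
    {Ψ : E → ℝ} (hΨ : ConcaveOn ℝ U Ψ) {x₀ : E} (hx₀ : x₀ ∈ U) :
    ∃ L : E →ₗ[ℝ] ℝ, ∀ x ∈ U, Ψ x ≤ Ψ x₀ + L x₀ - L x := by
  -- the strict hypograph
  set O : Set (E × ℝ) := (U ×ˢ (Set.univ : Set ℝ)) ∩ (fun z : E × ℝ => Ψ z.1 - z.2) ⁻¹' Set.Ioi 0
    with hO
  have hmemO : ∀ z : E × ℝ, z ∈ O ↔ z.1 ∈ U ∧ z.2 < Ψ z.1 := by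
    intro z
    simp only [hO, Set.mem_inter_iff, Set.mem_prod, Set.mem_univ, and_true, Set.mem_preimage,
      Set.mem_Ioi, sub_pos]
  have hOopen : IsOpen O := by
    refine ContinuousOn.isOpen_inter_preimage ?_ (hUo.prod isOpen_univ) isOpen_Ioi
    exact ((hΨ.continuousOn hUo).comp continuous_fst.continuousOn
      (fun z hz => hz.1)).sub continuous_snd.continuousOn
  have hOconv : Convex ℝ O := by
    intro z hz w hw a b ha hb hab
    rw [hmemO] at hz hw ⊢
    refine ⟨hUc hz.1 hw.1 ha hb hab, ?_⟩
    have hcon := hΨ.2 hz.1 hw.1 ha hb hab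
    have : a * z.2 + b * w.2 < a * Ψ z.1 + b * Ψ w.1 := by
      rcases lt_or_eq_of_le ha with ha' | ha'
      · exact add_lt_add_of_lt_of_le (by exact (mul_lt_mul_iff_right₀ ha').2 hz.2)
          (mul_le_mul_of_nonneg_left hw.2.le hb)
      · have hb1 : b = 1 := by linarith
        rw [← ha', hb1]; simpa using hw.2
    calc (a • z + b • w).2 = a * z.2 + b * w.2 := rfl
    _ < a * Ψ z.1 + b * Ψ w.1 := this
    _ ≤ Ψ (a • z.1 + b • w.1) := hcon
    _ = Ψ ((a • z + b • w).1) := rfl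
  have hnot : ((x₀, Ψ x₀) : E × ℝ) ∉ O := by
    rw [hmemO]; simp
  obtain ⟨f, hf⟩ := geometric_hahn_banach_open_point hOconv hOopen hnot
  -- decompose f
  set c : ℝ := f (0, 1) with hc
  have hdec : ∀ z : E × ℝ, f z = f (z.1, 0) + z.2 * c := by
    intro z
    have h1 : z = (z.1, (0:ℝ)) + ((0:E), z.2) := by simp
    have h2 : ((0:E), z.2) = z.2 • ((0:E), (1:ℝ)) := by simp
    rw [h1, map_add, h2, map_smul]
    simp [hc, smul_eq_mul]
  have key : ∀ x ∈ U, ∀ t < Ψ x, f (x, 0) + t * c < f (x₀, 0) + Ψ x₀ * c := by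
    intro x hx t ht
    have := hf (x, t) ((hmemO _).2 ⟨hx, ht⟩)
    rwa [hdec (x, t), hdec (x₀, Ψ x₀)] at this
  have hcpos : 0 < c := by
    have h1 := key x₀ hx₀ (Ψ x₀ - 1) (by linarith)
    nlinarith
  -- the subgradient
  refine ⟨(c⁻¹) • ((f.toLinearMap).comp (LinearMap.inl ℝ E ℝ)), fun x hx => ?_⟩
  simp only [LinearMap.smul_apply, LinearMap.comp_apply, LinearMap.inl_apply,
    ContinuousLinearMap.coe_coe, smul_eq_mul]
  have hle : Ψ x * c ≤ f (x₀, 0) + Ψ x₀ * c - f (x, 0) := by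
    by_contra hcon
    push_neg at hcon
    -- choose t < Ψ x with t * c close
    have h2 : (f (x₀, 0) + Ψ x₀ * c - f (x, 0)) / c < Ψ x := by
      rwa [div_lt_iff₀ hcpos]
    obtain ⟨t, ht1, ht2⟩ := exists_between h2
    have := key x hx t ht2
    rw [← div_lt_iff₀ hcpos] at hcon
    nlinarith [(div_lt_iff₀ hcpos).1 (lt_of_le_of_lt (le_refl _) ht1)]
  have := (div_le_div_iff_of_pos_right hcpos).2 hle
  rw [mul_div_cancel_right₀ _ hcpos.ne'] at this
  calc Ψ x ≤ (f (x₀, 0) + Ψ x₀ * c - f (x, 0)) / c := this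
  _ = Ψ x₀ + c⁻¹ * f (x₀, 0) - c⁻¹ * f (x, 0) := by field_simp; ring

lemma small_s {A C : ℝ} (h : ∀ s : ℝ, 0 < s → s < 1 → A ≤ s * C) : A ≤ 0 := by
  by_contra hA
  push_neg at hA
  rcases le_or_gt C 0 with hC | hC
  · have := h (1/2) (by norm_num) (by norm_num)
    nlinarith
  · have hs1 : (0:ℝ) < min (1/2) (A / (2 * C)) := by
      apply lt_min (by norm_num)
      positivity
    have hs2 : min (1/2) (A / (2 * C)) < 1 := lt_of_le_of_lt (min_le_left _ _) (by norm_num)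
    have h3 := h _ hs1 hs2
    have h4 : min (1/2) (A / (2 * C)) * C ≤ (A / (2 * C)) * C :=
      mul_le_mul_of_nonneg_right (min_le_right _ _) hC.le
    have h5 : A / (2 * C) * C = A / 2 := by field_simp
    rw [h5] at h4
    nlinarith

lemma sum_exp_eq {n : ℕ} (β : ℝ) (ℓ : Fin n → ℝ) (θ' : Fin n → ℝ) :
    Real.exp (psiFun θ') * (β - ∑ i, Real.exp (θ' i - psiFun θ') * ℓ i)
      = β + ∑ i, (β - ℓ i) * Real.exp (θ' i) := by
  have hterm : ∀ i, Real.exp (psiFun θ') * (Real.exp (θ' i - psiFun θ') * ℓ i)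
      = Real.exp (θ' i) * ℓ i := by
    intro i
    rw [Real.exp_sub]
    field_simp
  rw [mul_sub, Finset.mul_sum]
  simp_rw [hterm]
  rw [exp_psiFun, add_mul, one_mul, Finset.sum_mul]
  have : ∑ i, (β - ℓ i) * Real.exp (θ' i)
      = ∑ i, Real.exp (θ' i) * β - ∑ i, Real.exp (θ' i) * ℓ i := by
    rw [← Finset.sum_sub_distrib]
    exact Finset.sum_congr rfl fun i _ => by ring
  rw [this]
  ring

lemma psi_phi_eq {n : ℕ} {β : ℝ} {ℓ : Fin n → ℝ} (hβ : 0 < β) (hbl : ∀ i, 0 < β - ℓ i)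
    (θ' : Fin n → ℝ) :
    psiFun (θ' - fun i => Real.log β - Real.log (β - ℓ i))
      = Real.log (β + ∑ i, (β - ℓ i) * Real.exp (θ' i)) - Real.log β := by
  have he : ∀ i, Real.exp ((θ' - fun i => Real.log β - Real.log (β - ℓ i)) i)
      = (β - ℓ i) * Real.exp (θ' i) / β := by
    intro i
    simp only [Pi.sub_apply]
    rw [show θ' i - (Real.log β - Real.log (β - ℓ i))
        = θ' i + Real.log (β - ℓ i) - Real.log β by ring]
    rw [Real.exp_sub, Real.exp_add, Real.exp_log hβ, Real.exp_log (hbl i)]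
    ring
  have hS : 0 < β + ∑ i, (β - ℓ i) * Real.exp (θ' i) := by
    have : 0 ≤ ∑ i, (β - ℓ i) * Real.exp (θ' i) :=
      Finset.sum_nonneg fun i _ => le_of_lt (mul_pos (hbl i) (Real.exp_pos _))
    linarith
  rw [psiFun]
  simp_rw [he]
  rw [← Finset.sum_div]
  rw [show (1 : ℝ) + (∑ i, (β - ℓ i) * Real.exp (θ' i)) / β
      = (β + ∑ i, (β - ℓ i) * Real.exp (θ' i)) / β by field_simp]
  rw [Real.log_div hS.ne' hβ.ne']
lemma construct {n : ℕ} {Φ : (Fin (n + 1) → ℝ) → ℝ}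
    (hΦ0 : ∀ p ∈ openSimplex (n + 1), 0 ≤ Φ p)
    (hconc : ConcaveOn ℝ (openSimplex (n + 1)) Φ)
    (hpos : ∀ θ' : Fin n → ℝ, 0 < Φ (pMap θ'))
    (θ : Fin n → ℝ) {ε : ℝ} (hε : 0 < ε) :
    ∃ (φv : Fin n → ℝ) (β : ℝ),
      (∀ θ' : Fin n → ℝ,
        Real.log (Φ (pMap θ')) + psiFun θ' ≤ psiFun (θ' - φv) + Real.log β) ∧
      psiFun (θ - φv) + Real.log β = Real.log (Φ (pMap θ)) + psiFun θ + ε := by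
  set Ψ : (Fin n → ℝ) → ℝ := fun x => Φ (jmap x) with hΨdef
  have hΨ : ConcaveOn ℝ (Uset n) Ψ := concaveOn_comp_jmap (Uset_convex n) hconc
  have hΨ0 : ∀ x ∈ Uset n, 0 ≤ Ψ x := fun x hx => hΦ0 _ (jmap_mem hx)
  obtain ⟨hx₀U, hjx₀⟩ := xcoord_mem (pMap_mem θ)
  set x₀ : Fin n → ℝ := fun i => pMap θ (Fin.castSucc i) with hx₀def
  obtain ⟨L, hL⟩ := exists_subgradient (Uset_open n) (Uset_convex n) hΨ hx₀U
  have hexpε : 1 < Real.exp ε := by have := Real.add_one_le_exp ε; linarith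
  set δ : ℝ := Φ (pMap θ) * (Real.exp ε - 1) with hδdef
  have hδ : 0 < δ := mul_pos (hpos θ) (by linarith)
  set β : ℝ := Ψ x₀ + L x₀ + δ with hβdef
  have hbound : ∀ x ∈ Uset n, Ψ x + δ ≤ β - L x := by
    intro x hx
    have := hL x hx
    rw [hβdef]; linarith
  set z : Fin n → ℝ := fun _ => 1 / (n + 2) with hzdef
  have hmain : ∀ v : Fin n → ℝ, (∀ i, 0 ≤ v i) → (∑ i, v i ≤ 1) → L v ≤ β - δ := by
    intro v hv1 hv2
    have hmem : ∀ s : ℝ, 0 < s → s < 1 → ((1 - s) • v + s • z) ∈ Uset n := by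
      intro s h1 h2
      constructor
      · intro i
        simp only [Pi.add_apply, Pi.smul_apply, smul_eq_mul, hzdef]
        have : 0 < s * (1 / (n + 2) : ℝ) := by positivity
        nlinarith [hv1 i]
      · simp only [Pi.add_apply, Pi.smul_apply, smul_eq_mul, hzdef]
        rw [Finset.sum_add_distrib, ← Finset.mul_sum, ← Finset.mul_sum]
        have hzsum : ∑ _i : Fin n, (1 / (n + 2) : ℝ) = n / (n + 2) := by
          rw [Finset.sum_const, Finset.card_univ, Fintype.card_fin, nsmul_eq_mul]
          ring
        rw [hzsum]
        have hfrac : (n : ℝ) / (n + 2) < 1 := by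
          rw [div_lt_one (by positivity)]; linarith
        nlinarith
    have hstep : ∀ s : ℝ, 0 < s → s < 1 → L v - (β - δ) ≤ s * (L v - L z) := by
      intro s h1 h2
      have hb := hbound _ (hmem s h1 h2)
      have hnn := hΨ0 _ (hmem s h1 h2)
      have hlin : L ((1 - s) • v + s • z) = (1 - s) * L v + s * L z := by
        rw [map_add, map_smul, map_smul, smul_eq_mul, smul_eq_mul]
      rw [hlin] at hb
      nlinarith
    have := small_s hstep
    linarith
  set ℓ : Fin n → ℝ := fun i => L (fun j => if i = j then (1:ℝ) else 0) with hℓdef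
  have hβδ : ∀ i, ℓ i ≤ β - δ := by
    intro i
    apply hmain
    · intro j; split <;> norm_num
    · rw [Finset.sum_ite_eq]; simp
  have hβpos : 0 < β := by
    have h0 : L 0 ≤ β - δ := hmain 0 (fun i => le_refl 0) (by simp)
    rw [map_zero] at h0
    linarith
  have hbl : ∀ i, 0 < β - ℓ i := fun i => by linarith [hβδ i]
  set φv : Fin n → ℝ := fun i => Real.log β - Real.log (β - ℓ i) with hφdef
  have hLx : ∀ θ' : Fin n → ℝ,
      L (fun i => pMap θ' (Fin.castSucc i)) = ∑ i, Real.exp (θ' i - psiFun θ') * ℓ i := by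
    intro θ'
    rw [LinearMap.pi_apply_eq_sum_univ]
    exact Finset.sum_congr rfl fun i _ => by rw [smul_eq_mul, pMap_castSucc]
  have hcomp : ∀ θ' : Fin n → ℝ,
      Real.exp (psiFun θ') * (β - L (fun i => pMap θ' (Fin.castSucc i)))
        = β + ∑ i, (β - ℓ i) * Real.exp (θ' i) := by
    intro θ'
    rw [hLx θ']
    exact sum_exp_eq β ℓ θ'
  have hineq : ∀ θ' : Fin n → ℝ,
      Φ (pMap θ') + δ ≤ β - L (fun i => pMap θ' (Fin.castSucc i)) := by
    intro θ'
    obtain ⟨hxU, hjx⟩ := xcoord_mem (pMap_mem θ')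
    have := hbound _ hxU
    rw [hΨdef] at this
    simp only at this
    rw [hjx] at this
    exact this
  have hSpos : ∀ θ' : Fin n → ℝ, 0 < β + ∑ i, (β - ℓ i) * Real.exp (θ' i) := by
    intro θ'
    have : 0 ≤ ∑ i, (β - ℓ i) * Real.exp (θ' i) :=
      Finset.sum_nonneg fun i _ => le_of_lt (mul_pos (hbl i) (Real.exp_pos _))
    linarith
  refine ⟨φv, β, ?_, ?_⟩
  · intro θ'
    rw [hφdef, psi_phi_eq hβpos hbl θ']
    have h1 : Φ (pMap θ') * Real.exp (psiFun θ')
        ≤ β + ∑ i, (β - ℓ i) * Real.exp (θ' i) := by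
      rw [← hcomp θ']
      have h2 : Φ (pMap θ') ≤ β - L (fun i => pMap θ' (Fin.castSucc i)) := by
        linarith [hineq θ']
      calc Φ (pMap θ') * Real.exp (psiFun θ')
          ≤ (β - L (fun i => pMap θ' (Fin.castSucc i))) * Real.exp (psiFun θ') :=
            mul_le_mul_of_nonneg_right h2 (Real.exp_pos _).le
        _ = _ := by ring
    have h3 : Real.log (Φ (pMap θ') * Real.exp (psiFun θ'))
        ≤ Real.log (β + ∑ i, (β - ℓ i) * Real.exp (θ' i)) :=
      Real.log_le_log (mul_pos (hpos θ') (Real.exp_pos _)) h1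
    rw [Real.log_mul (hpos θ').ne' (Real.exp_ne_zero _), Real.log_exp] at h3
    linarith
  · rw [hφdef, psi_phi_eq hβpos hbl θ]
    have heq1 : β - L x₀ = Φ (pMap θ) * Real.exp ε := by
      have hΨx₀ : Ψ x₀ = Φ (pMap θ) := by rw [hΨdef]; simp only; rw [hx₀def, hjx₀]
      rw [hβdef, hΨx₀, hδdef]; ring
    have heq2 : β + ∑ i, (β - ℓ i) * Real.exp (θ i)
        = Real.exp (psiFun θ) * (Φ (pMap θ) * Real.exp ε) := by
      rw [← heq1, ← hcomp θ]
    rw [heq2, Real.log_mul (Real.exp_ne_zero _) (mul_pos (hpos θ) (Real.exp_pos _)).ne',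
      Real.log_mul (hpos θ).ne' (Real.exp_ne_zero _), Real.log_exp, Real.log_exp]
    ring

/-- If `φ : Δₙ → ℝ ∪ {−∞}` is exponentially concave — encoded by a nonnegative concave
function `Φ = e^φ` on the open simplex, with `φ = log Φ` (`= −∞` where `Φ = 0`) — then
`f(θ) = φ(p(θ)) + ψ(θ)` is `c`-concave for the cost `c(θ, φ) = ψ(θ − φ)`: it is the
`c`-transform `f(θ) = inf_φ (c(θ,φ) − g(φ))` of some `g : ℝ^{n−1} → ℝ ∪ {−∞}`. -/
theorem exp_concave_implies_c_concave (n : ℕ) (Φ : (Fin (n + 1) → ℝ) → ℝ)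
    (hΦ0 : ∀ p ∈ openSimplex (n + 1), 0 ≤ Φ p)
    (hconc : ConcaveOn ℝ (openSimplex (n + 1)) Φ) :
    ∃ g : (Fin n → ℝ) → EReal,
      ∀ θ : Fin n → ℝ,
        (if Φ (pMap θ) = 0 then (⊥ : EReal)
          else ((Real.log (Φ (pMap θ)) + psiFun θ : ℝ) : EReal))
        = ⨅ φv : Fin n → ℝ, (((psiFun (θ - φv) : ℝ) : EReal) - g φv) := by
  by_cases hex : ∃ θ₀ : Fin n → ℝ, Φ (pMap θ₀) = 0
  · obtain ⟨θ₀, h0⟩ := hex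
    refine ⟨fun _ => (⊤ : EReal), fun θ => ?_⟩
    have hz : Φ (pMap θ) = 0 :=
      zero_propagate hΦ0 hconc (pMap_mem θ₀) h0 (pMap_mem θ)
    rw [if_pos hz]
    simp [EReal.sub_top]
  · push_neg at hex
    have hpos : ∀ θ' : Fin n → ℝ, 0 < Φ (pMap θ') := fun θ' =>
      lt_of_le_of_ne (hΦ0 _ (pMap_mem θ')) (Ne.symm (hex θ'))
    set F : (Fin n → ℝ) → ℝ := fun θ' => Real.log (Φ (pMap θ')) + psiFun θ' with hF
    refine ⟨fun φv => ⨅ θ' : Fin n → ℝ, ((psiFun (θ' - φv) - F θ' : ℝ) : EReal), fun θ => ?_⟩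
    rw [if_neg (hex θ)]
    apply le_antisymm
    · apply le_iInf
      intro φv
      have h1 : (⨅ θ' : Fin n → ℝ, ((psiFun (θ' - φv) - F θ' : ℝ) : EReal))
          ≤ ((psiFun (θ - φv) - F θ : ℝ) : EReal) := iInf_le _ θ
      rw [EReal.coe_sub] at h1
      exact ereal_sub_le_of_le h1
    · apply ereal_le_of_forall_eps
      intro ε hε
      obtain ⟨φv, β, hkey, heq⟩ := construct hΦ0 hconc hpos θ hε
      have hg : ((-Real.log β : ℝ) : EReal)
          ≤ ⨅ θ' : Fin n → ℝ, ((psiFun (θ' - φv) - F θ' : ℝ) : EReal) := by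
        apply le_iInf
        intro θ'
        rw [EReal.coe_le_coe_iff]
        have := hkey θ'
        rw [hF]
        simp only
        linarith
      calc (⨅ φv' : Fin n → ℝ, (((psiFun (θ - φv') : ℝ) : EReal)
              - ⨅ θ' : Fin n → ℝ, ((psiFun (θ' - φv') - F θ' : ℝ) : EReal)))
          ≤ ((psiFun (θ - φv) : ℝ) : EReal)
              - ⨅ θ' : Fin n → ℝ, ((psiFun (θ' - φv) - F θ' : ℝ) : EReal) := iInf_le _ φv
        _ ≤ ((psiFun (θ - φv) : ℝ) : EReal) - ((-Real.log β : ℝ) : EReal) :=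
            EReal.sub_le_sub (le_refl _) hg
        _ = ((psiFun (θ - φv) + Real.log β : ℝ) : EReal) := by
            rw [← EReal.coe_sub]
            norm_num
        _ = ((Real.log (Φ (pMap θ)) + psiFun θ + ε : ℝ) : EReal) := by rw [heq]
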